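/- Telescoping recurrence of the conflict-aware greedy proof: under the stated noisy-oracle and conflict-aware greedy assumptions, for every step t = 1, …, K the residual gap satisfies f(V*) − f(V_t) ≤ (1 − 1/K) · (f(V*) − f(V_{t-1})) + 2·ε_t + 2·λ·γ_t. -/

import Mathlib

/-- Telescoping recurrence of the conflict-aware greedy proof: under the
stated noisy-oracle and conflict-aware greedy assumptions, for every step
`t = 1, …, K` the residual gap satisfies
`f(V*) − f(V_t) ≤ (1 − 1/K) · (f(V*) − f(V_{t-1})) + 2·ε_t + 2·λ·γ_t`. -/
theorem stmt_3
    {V : Type*} [Fintype V] [DecidableEq V]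
    (f : Finset V → ℝ)
    (hmono : ∀ A B : Finset V, A ⊆ B → f A ≤ f B)
    (hsub : ∀ A B : Finset V, A ⊆ B → ∀ v : V, v ∉ B →
      f (insert v B) - f B ≤ f (insert v A) - f A)
    (hnorm : f ∅ = 0)
    (K : ℕ) (hK : 1 ≤ K)
    (Vopt : Finset V) (hopt : Vopt.card ≤ K)
    (u : ℕ → V) (Vt : ℕ → Finset V)
    (hV0 : Vt 0 = ∅)
    (hVstep : ∀ t ∈ Finset.Icc 1 K, Vt t = insert (u t) (Vt (t - 1)))
    (G L : ℕ → V → ℝ) (ε : ℕ → ℝ) (η lam : ℝ)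
    (hLnn : ∀ t ∈ Finset.Icc 1 K, ∀ v : V, 0 ≤ L t v)
    (hεnn : ∀ t ∈ Finset.Icc 1 K, 0 ≤ ε t)
    (hηnn : 0 ≤ η)
    (hproxy : ∀ t ∈ Finset.Icc 1 K, ∀ v : V,
      |G t v - (f (insert v (Vt (t - 1))) - f (Vt (t - 1)))| ≤ ε t + η * L t v)
    (hlam : η ≤ lam)
    (hgreedy : ∀ t ∈ Finset.Icc 1 K, ∀ v : V,
      G t v - lam * L t v ≤ G t (u t) - lam * L t (u t))
    (vstar : ℕ → V)
    (hstar : ∀ t ∈ Finset.Icc 1 K, ∀ v : V,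
      f (insert v (Vt (t - 1))) - f (Vt (t - 1)) ≤
        f (insert (vstar t) (Vt (t - 1))) - f (Vt (t - 1))) :
    ∀ t ∈ Finset.Icc 1 K,
      f Vopt - f (Vt t) ≤
        (1 - 1 / (K : ℝ)) * (f Vopt - f (Vt (t - 1)))
          + 2 * ε t + 2 * lam * L t (vstar t) := by
  intro t ht
  set S := Vt (t - 1) with hS
  -- nonnegativity of marginals
  have hmarg_nn : ∀ v : V, 0 ≤ f (insert v S) - f S := by
    intro v
    have := hmono S (insert v S) (Finset.subset_insert v S)
    linarith
  -- submodular sum bound: f (S ∪ T) - f S ≤ Σ_{v ∈ T} Δ(v|S)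
  have hsum : ∀ T : Finset V,
      f (S ∪ T) - f S ≤ ∑ v ∈ T, (f (insert v S) - f S) := by
    intro T
    induction T using Finset.induction_on with
    | empty => simp
    | @insert a T ha ih =>
      have hins : S ∪ insert a T = insert a (S ∪ T) := by
        ext x; simp [or_comm, or_left_comm]
      rw [hins, Finset.sum_insert ha]
      by_cases haST : a ∈ S ∪ T
      · rw [Finset.insert_eq_self.2 haST]
        have := hmarg_nn a
        linarith
      · have h1 := hsub S (S ∪ T) Finset.subset_union_left a haST
        linarith
  -- each marginal ≤ marginal of vstar
  have hstar' := hstar t ht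
  have hK0 : (0:ℝ) < (K:ℝ) := by exact_mod_cast hK
  have hbound : f Vopt - f S ≤ (K:ℝ) * (f (insert (vstar t) S) - f S) := by
    have h1 : f Vopt ≤ f (S ∪ Vopt) := hmono _ _ Finset.subset_union_right
    have h2 := hsum Vopt
    have h3 : ∑ v ∈ Vopt, (f (insert v S) - f S) ≤
        (Vopt.card : ℝ) * (f (insert (vstar t) S) - f S) := by
      calc ∑ v ∈ Vopt, (f (insert v S) - f S)
          ≤ ∑ _v ∈ Vopt, (f (insert (vstar t) S) - f S) :=
            Finset.sum_le_sum (fun v _ => hstar' v)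
        _ = (Vopt.card : ℝ) * (f (insert (vstar t) S) - f S) := by
            simp [mul_comm]; ring
    have h4 : (Vopt.card : ℝ) * (f (insert (vstar t) S) - f S) ≤
        (K:ℝ) * (f (insert (vstar t) S) - f S) := by
      apply mul_le_mul_of_nonneg_right _ (hmarg_nn _)
      exact_mod_cast hopt
    linarith
  -- greedy bound on Δ(u t | S)
  have hp_u := hproxy t ht (u t)
  have hp_s := hproxy t ht (vstar t)
  have hg := hgreedy t ht (vstar t)
  have hLu := hLnn t ht (u t)
  have hLs := hLnn t ht (vstar t)
  have habs_u := abs_le.1 hp_u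
  have habs_s := abs_le.1 hp_s
  have hgain : f (insert (vstar t) S) - f S - 2 * ε t - 2 * lam * L t (vstar t)
      ≤ f (insert (u t) S) - f S := by
    nlinarith [habs_u.1, habs_u.2, habs_s.1, habs_s.2]
  -- combine
  have hVt : Vt t = insert (u t) S := hVstep t ht
  rw [hVt]
  have hKinv : (1 / (K:ℝ)) * (f Vopt - f S) ≤ f (insert (vstar t) S) - f S := by
    rw [div_mul_eq_mul_div, one_mul, div_le_iff₀ hK0, mul_comm]
    exact hbound
  linarith
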